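/- Let d, m ≥ 1 be integers, let I ⊂ ℝ^d be a finite set of collocation points with a designated point x₀ ∈ I, let h > 0, and let K ⊂ ℝ^d be a measurable set with Lebesgue measure vol(K) ≤ h^d. Let Λ ≥ 0 be a constant such that every vector-valued polynomial q : ℝ^d → ℝ^d whose components have total degree at most m satisfies ∫_K ‖q(x)‖² dx ≤ Λ² h^d Σ_{x∈I} ‖q(x)‖². Let g : ℝ^d → ℝ^d be any function, and let p be a vector-valued polynomial of componentwise total degree at most m with p(x₀) = g(x₀) that minimizes Σ_{x∈I} ‖q(x) − g(x)‖² among all such constrained polynomials q. Then (∫_K ‖p(x)‖² dx)^{1/2} ≤ (1 + 2Λ·√(#I)) · h^{d/2} · max_{x∈I} ‖g(x)‖, where #I is the number of collocation points and ‖·‖ is the Euclidean norm on ℝ^d. -/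

import Mathlib

open MeasureTheory

noncomputable def evalVec {d : ℕ} (q : Fin d → MvPolynomial (Fin d) ℝ)
    (x : EuclideanSpace ℝ (Fin d)) : EuclideanSpace ℝ (Fin d) :=
  WithLp.toLp 2 (fun i => MvPolynomial.eval (fun j => x j) (q i))

lemma aux_S_zero {S L : ℝ} (hL : 0 ≤ L) (H : ∀ s : ℝ, 0 ≤ 2*s*S + s^2*L) : S = 0 := by
  have h2 : 0 < L + 1 := by linarith
  have h1 := H (-S/(L+1))
  have h3 : 2 * (-S/(L+1)) * S + (-S/(L+1))^2 * L
      = (-(2*S^2)*(L+1) + S^2*L)/(L+1)^2 := by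
    field_simp
  rw [h3, le_div_iff₀ (by positivity)] at h1
  nlinarith [sq_nonneg S]

lemma aux_inner {F : Type*} [NormedAddCommGroup F] [InnerProductSpace ℝ F] (a b e : F) :
    ‖a - e‖^2 + ‖a - b‖^2 - ‖b - e‖^2 = 2 * (inner ℝ (a - b) (a - e) : ℝ) := by
  simp only [norm_sub_sq_real, inner_sub_left, inner_sub_right,
    real_inner_self_eq_norm_sq, real_inner_comm b a, real_inner_comm e a, real_inner_comm e b]
  ring

lemma continuous_evalVec {d : ℕ} (q : Fin d → MvPolynomial (Fin d) ℝ) :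
    Continuous (evalVec q) := by
  unfold evalVec
  apply (PiLp.continuous_toLp ..).comp
  apply continuous_pi
  intro i
  exact (MvPolynomial.continuous_eval (p := q i)).comp
    (continuous_pi fun j => by fun_prop)

set_option maxHeartbeats 1000000 in
/-- Lemma 3.2 (stability of the reconstruction): the constrained least-squares
fit `p` of `g` on the collocation points `I` satisfies
`‖p‖_{L²(K)} ≤ (1 + 2Λ√(#I)) h^{d/2} max_{x∈I} ‖g(x)‖`. -/
theorem stmt_3 {d m : ℕ} (hd : 1 ≤ d) (hm : 1 ≤ m)
    (I : Finset (EuclideanSpace ℝ (Fin d)))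
    (x₀ : EuclideanSpace ℝ (Fin d)) (hx₀ : x₀ ∈ I)
    (h : ℝ) (hh : 0 < h)
    (K : Set (EuclideanSpace ℝ (Fin d))) (hK : MeasurableSet K)
    (hvol : volume K ≤ ENNReal.ofReal (h ^ d))
    (Λ : ℝ) (hΛ : 0 ≤ Λ)
    (hstab : ∀ q : Fin d → MvPolynomial (Fin d) ℝ, (∀ i, (q i).totalDegree ≤ m) →
      ∫ x in K, ‖evalVec q x‖ ^ 2 ≤ Λ ^ 2 * h ^ d * ∑ x ∈ I, ‖evalVec q x‖ ^ 2)
    (g : EuclideanSpace ℝ (Fin d) → EuclideanSpace ℝ (Fin d))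
    (p : Fin d → MvPolynomial (Fin d) ℝ)
    (hpdeg : ∀ i, (p i).totalDegree ≤ m)
    (hpc : evalVec p x₀ = g x₀)
    (hpmin : ∀ q : Fin d → MvPolynomial (Fin d) ℝ, (∀ i, (q i).totalDegree ≤ m) →
      evalVec q x₀ = g x₀ →
      ∑ x ∈ I, ‖evalVec p x - g x‖ ^ 2 ≤ ∑ x ∈ I, ‖evalVec q x - g x‖ ^ 2) :
    (∫ x in K, ‖evalVec p x‖ ^ 2) ^ (1 / 2 : ℝ) ≤
      (1 + 2 * Λ * Real.sqrt (I.card : ℝ)) * h ^ ((d : ℝ) / 2) *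
        I.sup' ⟨x₀, hx₀⟩ (fun x => ‖g x‖) := by

  set v := g x₀ with hv
  set M := I.sup' ⟨x₀, hx₀⟩ (fun x => ‖g x‖) with hMdef
  have hMg : ∀ x ∈ I, ‖g x‖ ≤ M := fun x hx => Finset.le_sup' (fun y => ‖g y‖) hx
  have hM0 : 0 ≤ M := le_trans (norm_nonneg (g x₀)) (hMg x₀ hx₀)
  set N : ℝ := (I.card : ℝ) with hNdef
  have hN0 : (0:ℝ) ≤ N := Nat.cast_nonneg _
  set H := Real.sqrt (h ^ d) with hHdef
  have hH0 : 0 < H := Real.sqrt_pos.mpr (by positivity)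
  have hH2 : H ^ 2 = h ^ d := Real.sq_sqrt (by positivity)
  -- the right-hand side equals (M*H) + (2*Λ*√N*M*H)
  have hRHS : (1 + 2 * Λ * Real.sqrt N) * h ^ ((d : ℝ) / 2) * M
      = M * H + 2 * Λ * Real.sqrt N * M * H := by
    have : h ^ ((d : ℝ) / 2) = H := by
      rw [hHdef, Real.sqrt_eq_rpow, ← Real.rpow_natCast h d, ← Real.rpow_mul hh.le,
        mul_one_div]
    rw [this]; ring
  rw [hRHS]
  set a := 2 * Λ * Real.sqrt N * M * H with hadef
  have ha0 : 0 ≤ a := by positivity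
  have hb0 : 0 ≤ M * H := by positivity
  -- the constant and difference polynomials
  set c : Fin d → MvPolynomial (Fin d) ℝ := fun i => MvPolynomial.C (v i) with hcdef
  set r : Fin d → MvPolynomial (Fin d) ℝ := fun i => p i - c i with hrdef
  have heval_r : ∀ x, evalVec r x = evalVec p x - v := by
    intro x
    ext i
    simp [evalVec, hrdef, hcdef, PiLp.sub_apply]
  have hrdeg : ∀ i, (r i).totalDegree ≤ m := by
    intro i
    refine le_trans (MvPolynomial.totalDegree_sub _ _) ?_
    simp [hcdef, MvPolynomial.totalDegree_C, hpdeg i]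
  -- key quantities
  set D := ∑ x ∈ I, ‖evalVec p x - g x‖ ^ 2 with hDdef
  set L := ∑ x ∈ I, ‖evalVec p x - v‖ ^ 2 with hLdef
  set A := ∑ x ∈ I, ‖g x - v‖ ^ 2 with hAdef
  set S := ∑ x ∈ I, (inner ℝ (evalVec p x - g x) (evalVec p x - v) : ℝ) with hSdef
  have hL0 : 0 ≤ L := Finset.sum_nonneg fun x _ => by positivity
  have hD0 : 0 ≤ D := Finset.sum_nonneg fun x _ => by positivity
  -- the first-order optimality condition : S = 0
  have hS : S = 0 := by
    apply aux_S_zero hL0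
    intro s
    set q : Fin d → MvPolynomial (Fin d) ℝ := fun i => p i + MvPolynomial.C s * r i with hqdef
    have hqdeg : ∀ i, (q i).totalDegree ≤ m := by
      intro i
      refine le_trans (MvPolynomial.totalDegree_add _ _) (max_le (hpdeg i) ?_)
      refine le_trans (MvPolynomial.totalDegree_mul _ _) ?_
      simp [MvPolynomial.totalDegree_C, hrdeg i]
    have heval_q : ∀ x, evalVec q x = evalVec p x + s • (evalVec p x - v) := by
      intro x
      ext i
      have h1 : evalVec q x i = evalVec p x i + s * evalVec r x i := by
        simp only [evalVec, PiLp.toLp_apply, hqdef, map_add, map_mul, MvPolynomial.eval_C]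
      have h2 : evalVec r x i = (evalVec p x - v) i := by rw [heval_r x]
      rw [h1, h2]
      simp only [PiLp.add_apply, PiLp.smul_apply, PiLp.sub_apply, smul_eq_mul]
    have hq0 : evalVec q x₀ = g x₀ := by
      rw [heval_q, hpc, ← hv, sub_self, smul_zero, add_zero]
    have hmin := hpmin q hqdeg hq0
    have hsum : ∑ x ∈ I, ‖evalVec q x - g x‖ ^ 2 = D + (2*s*S + s^2*L) := by
      rw [hDdef, hSdef, hLdef, Finset.mul_sum, Finset.mul_sum, ← Finset.sum_add_distrib,
        ← Finset.sum_add_distrib]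
      refine Finset.sum_congr rfl fun x hx => ?_
      rw [heval_q]
      have : evalVec p x + s • (evalVec p x - v) - g x
          = (evalVec p x - g x) + s • (evalVec p x - v) := by abel
      rw [this, norm_add_sq_real, real_inner_smul_right, norm_smul]
      simp [mul_pow, abs_mul_abs_self]
      ring
    rw [hsum] at hmin
    linarith
  -- Pythagoras : L = A - D ≤ A
  have hLA : L ≤ A := by
    have hkey : L + D - A = 2 * S := by
      rw [hLdef, hDdef, hAdef, hSdef, Finset.mul_sum, ← Finset.sum_add_distrib,
        ← Finset.sum_sub_distrib]
      exact Finset.sum_congr rfl fun x hx => aux_inner (evalVec p x) (g x) v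
    rw [hS] at hkey
    linarith
  -- A ≤ 4 N M²
  have hA4 : A ≤ 4 * N * M ^ 2 := by
    have hstep : A ≤ ∑ _x ∈ I, (2*M)^2 := by
      rw [hAdef]
      refine Finset.sum_le_sum fun x hx => ?_
      have h1 : ‖g x - v‖ ≤ 2 * M := by
        refine le_trans (norm_sub_le _ _) ?_
        have hgx := hMg x hx
        have hgx0 := hMg x₀ hx₀
        rw [hv]
        linarith
      nlinarith [norm_nonneg (g x - v)]
    refine le_trans hstep ?_
    rw [Finset.sum_const, nsmul_eq_mul, ← hNdef]
    exact le_of_eq (by ring)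
  -- stability applied to r
  have hRr : ∫ x in K, ‖evalVec r x‖ ^ 2 ≤ a ^ 2 := by
    refine le_trans (hstab r hrdeg) ?_
    have h1 : ∑ x ∈ I, ‖evalVec r x‖ ^ 2 = L := by
      rw [hLdef]; exact Finset.sum_congr rfl fun x _ => by rw [heval_r]
    rw [h1, hadef]
    have hsN : Real.sqrt N ^ 2 = N := Real.sq_sqrt hN0
    have : (2 * Λ * Real.sqrt N * M * H) ^ 2 = Λ ^ 2 * h ^ d * (4 * N * M ^ 2) := by
      rw [mul_pow, mul_pow, mul_pow, mul_pow, hsN, hH2]; ring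
    rw [this]
    have hh2 : (0:ℝ) ≤ Λ ^ 2 * h ^ d := by positivity
    exact mul_le_mul_of_nonneg_left (le_trans hLA hA4) hh2
  -- finite measure facts
  have hvolK_lt : volume K < ⊤ := lt_of_le_of_lt hvol ENNReal.ofReal_lt_top
  haveI : IsFiniteMeasure (volume.restrict K) := by
    constructor
    rw [Measure.restrict_apply_univ]
    exact hvolK_lt
  set volK := (volume K).toReal with hvolKdef
  have hvolK0 : 0 ≤ volK := ENNReal.toReal_nonneg
  have hvolK_le : volK ≤ h ^ d := ENNReal.toReal_le_of_le_ofReal (by positivity) hvol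
  have hsvolK : Real.sqrt volK ≤ H := Real.sqrt_le_sqrt hvolK_le
  by_cases hint : IntegrableOn (fun x => ‖evalVec p x‖ ^ 2) K volume
  case neg =>
    rw [integral_undef hint, Real.zero_rpow (by norm_num)]
    positivity
  case pos =>
  -- integrability facts
  have hcont_r := continuous_evalVec r
  have hintc : IntegrableOn (fun _ : EuclideanSpace ℝ (Fin d) => ‖v‖ ^ 2) K volume :=
    integrableOn_const hvolK_lt.ne
  have hint1 : IntegrableOn (fun _ : EuclideanSpace ℝ (Fin d) => (1:ℝ)) K volume :=
    integrableOn_const hvolK_lt.ne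
  have hint_r2 : IntegrableOn (fun x => ‖evalVec r x‖ ^ 2) K volume := by
    have hbd1 : IntegrableOn (fun x => 2 * ‖evalVec p x‖ ^ 2 + 2 * ‖v‖ ^ 2) K volume :=
      (hint.const_mul 2).add (hintc.const_mul 2)
    refine Integrable.mono' hbd1 (hcont_r.norm.pow 2).aestronglyMeasurable ?_
    filter_upwards with x
    rw [Real.norm_of_nonneg (by positivity), heval_r x]
    have h1 : ‖evalVec p x - v‖ ^ 2 ≤ (‖evalVec p x‖ + ‖v‖) ^ 2 :=
      pow_le_pow_left₀ (norm_nonneg _) (norm_sub_le _ _) 2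
    have h2 := two_mul_le_add_sq ‖evalVec p x‖ ‖v‖
    calc ‖evalVec p x - v‖ ^ 2 ≤ (‖evalVec p x‖ + ‖v‖) ^ 2 := h1
      _ = ‖evalVec p x‖ ^ 2 + 2 * ‖evalVec p x‖ * ‖v‖ + ‖v‖ ^ 2 := by ring
      _ ≤ 2 * ‖evalVec p x‖ ^ 2 + 2 * ‖v‖ ^ 2 := by linarith
  have hint_r : IntegrableOn (evalVec r) K volume := by
    have hbd2 : IntegrableOn (fun x => ‖evalVec r x‖ ^ 2 + 1) K volume := hint_r2.add hint1
    refine Integrable.mono' hbd2 hcont_r.aestronglyMeasurable ?_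
    filter_upwards with x
    linarith [sq_nonneg (‖evalVec r x‖ - 1), norm_nonneg (evalVec r x),
      sq_nonneg ‖evalVec r x‖]
  have hint_inner : IntegrableOn (fun x => (inner ℝ v (evalVec r x) : ℝ)) K volume :=
    hint_r.const_inner v
  set Rr := ∫ x in K, ‖evalVec r x‖ ^ 2 with hRrdef
  have hRr0 : 0 ≤ Rr := integral_nonneg fun x => by positivity
  -- expand the integral
  have hsplit : ∫ x in K, ‖evalVec p x‖ ^ 2
      = Rr + 2 * (inner ℝ v (∫ x in K, evalVec r x) : ℝ) + ‖v‖ ^ 2 * volK := by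
    have hpt : ∀ x : EuclideanSpace ℝ (Fin d), ‖evalVec p x‖ ^ 2
        = ‖evalVec r x‖ ^ 2 + ((2 : ℝ) * (inner ℝ v (evalVec r x) : ℝ) + ‖v‖ ^ 2) := by
      intro x
      have hx : evalVec p x = evalVec r x + v := by rw [heval_r x]; abel
      rw [hx, norm_add_sq_real, real_inner_comm]
      ring
    rw [show (∫ x in K, ‖evalVec p x‖ ^ 2)
        = ∫ x in K, (‖evalVec r x‖ ^ 2 + ((2 : ℝ) * (inner ℝ v (evalVec r x) : ℝ) + ‖v‖ ^ 2))
      from integral_congr_ae (Filter.Eventually.of_forall fun x => hpt x)]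
    have hg2 : IntegrableOn (fun x => (2 : ℝ) * (inner ℝ v (evalVec r x) : ℝ) + ‖v‖ ^ 2)
        K volume := (hint_inner.const_mul 2).add hintc
    have hg3 : IntegrableOn (fun x => (2 : ℝ) * (inner ℝ v (evalVec r x) : ℝ)) K volume :=
      hint_inner.const_mul 2
    rw [integral_add hint_r2 hg2, integral_add hg3 hintc, integral_const_mul,
      integral_inner hint_r v, setIntegral_const, smul_eq_mul, measureReal_def]
    ring
  -- Cauchy–Schwarz for the cross term
  have hCS : ∫ x in K, ‖evalVec r x‖ ≤ Real.sqrt volK * Real.sqrt Rr := by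
    have hconj : Real.HolderConjugate 2 2 := Real.HolderConjugate.two_two
    have hof2 : ENNReal.ofReal (2:ℝ) = 2 := by
      rw [ENNReal.ofReal_ofNat]
    have hf : MemLp (fun x => ‖evalVec r x‖) (ENNReal.ofReal 2) (volume.restrict K) := by
      rw [hof2]
      exact ((memLp_two_iff_integrable_sq_norm hcont_r.aestronglyMeasurable).mpr
        hint_r2).norm
    have hg : MemLp (fun _ : EuclideanSpace ℝ (Fin d) => (1:ℝ)) (ENNReal.ofReal 2)
        (volume.restrict K) := memLp_const 1
    have hH := integral_mul_le_Lp_mul_Lq_of_nonneg hconj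
      (Filter.Eventually.of_forall fun x => norm_nonneg (evalVec r x))
      (Filter.Eventually.of_forall fun _ => zero_le_one) hf hg
    have e1 : ∫ x in K, ‖evalVec r x‖ * 1 = ∫ x in K, ‖evalVec r x‖ := by simp
    have e2 : ∫ x in K, ‖evalVec r x‖ ^ (2:ℝ) = Rr := by
      rw [hRrdef]
      exact integral_congr_ae (Filter.Eventually.of_forall fun x => Real.rpow_two _)
    have e3 : ∫ _x in K, (1:ℝ) ^ (2:ℝ) = volK := by
      simp [Real.one_rpow, hvolKdef, measureReal_def]
    rw [e1, e2, e3] at hH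
    rw [← Real.sqrt_eq_rpow, ← Real.sqrt_eq_rpow] at hH
    linarith [hH]
  have hinner_le : (inner ℝ v (∫ x in K, evalVec r x) : ℝ)
      ≤ M * (Real.sqrt volK * Real.sqrt Rr) := by
    refine le_trans (real_inner_le_norm _ _) ?_
    have h4 : ‖v‖ ≤ M := by rw [hv]; exact hMg x₀ hx₀
    have h5 : ‖∫ x in K, evalVec r x‖ ≤ Real.sqrt volK * Real.sqrt Rr :=
      le_trans (norm_integral_le_integral_norm _) hCS
    exact mul_le_mul h4 h5 (norm_nonneg _) hM0
  -- assemble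
  have hIp_le : ∫ x in K, ‖evalVec p x‖ ^ 2 ≤ (Real.sqrt Rr + M * Real.sqrt volK) ^ 2 := by
    rw [hsplit]
    have h4 : ‖v‖ ≤ M := by rw [hv]; exact hMg x₀ hx₀
    have h7 : ‖v‖ ^ 2 ≤ M ^ 2 := pow_le_pow_left₀ (norm_nonneg v) h4 2
    have h8 : ‖v‖ ^ 2 * volK ≤ M ^ 2 * volK := mul_le_mul_of_nonneg_right h7 hvolK0
    have h9 : (Real.sqrt Rr + M * Real.sqrt volK) ^ 2
        = Real.sqrt Rr ^ 2 + 2 * (M * (Real.sqrt volK * Real.sqrt Rr))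
          + M ^ 2 * Real.sqrt volK ^ 2 := by ring
    rw [h9, Real.sq_sqrt hRr0, Real.sq_sqrt hvolK0]
    linarith [hinner_le, h8]
  have hfinal : Real.sqrt (∫ x in K, ‖evalVec p x‖ ^ 2) ≤ M * H + a := by
    refine le_trans (Real.sqrt_le_sqrt hIp_le) ?_
    rw [Real.sqrt_sq (by positivity)]
    have h5 : Real.sqrt Rr ≤ a := by
      have h6 := Real.sqrt_le_sqrt hRr
      rwa [Real.sqrt_sq ha0] at h6
    have h6 : M * Real.sqrt volK ≤ M * H := mul_le_mul_of_nonneg_left hsvolK hM0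
    linarith
  calc (∫ x in K, ‖evalVec p x‖ ^ 2) ^ (1 / 2 : ℝ)
      = Real.sqrt (∫ x in K, ‖evalVec p x‖ ^ 2) := (Real.sqrt_eq_rpow _).symm
    _ ≤ M * H + a := hfinal
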